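/- Let 1 ≤ n < d and let Γ = {(y, 𝒜(y)) : y ∈ ℝ^n} ⊂ ℝ^d be the graph of a Lipschitz function 𝒜 : ℝ^n → ℝ^{d−n} with Lipschitz constant Lip(𝒜) < 1. Then there exists a constant C > 0, depending only on n, d, and Lip(𝒜), such that for every z ∈ Γ and all 0 < a ≤ b, the n-dimensional Hausdorff measure of the intersection of Γ with the closed annulus A(z,a,b) := {x : a ≤ |x−z| ≤ b} satisfies ℋ^n(Γ ∩ A(z,a,b)) ≤ C (b − a) b^{n−1}. -/

import Mathlib

open MeasureTheory Metric Set
open scoped NNReal ENNReal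

/-- Projection onto the first `n` coordinates of `ℝ^{n+m}`. -/
noncomputable def piH (n m : ℕ) (x : EuclideanSpace ℝ (Fin (n + m))) :
    EuclideanSpace ℝ (Fin n) :=
  (WithLp.equiv 2 (Fin n → ℝ)).symm (fun i => x (Fin.castAdd m i))

/-- Projection onto the last `m` coordinates of `ℝ^{n+m}`. -/
noncomputable def piV (n m : ℕ) (x : EuclideanSpace ℝ (Fin (n + m))) :
    EuclideanSpace ℝ (Fin m) :=
  (WithLp.equiv 2 (Fin m → ℝ)).symm (fun i => x (Fin.natAdd n i))

noncomputable def graphMap {n m : ℕ} (A : EuclideanSpace ℝ (Fin n) → EuclideanSpace ℝ (Fin m))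
    (y : EuclideanSpace ℝ (Fin n)) : EuclideanSpace ℝ (Fin (n + m)) :=
  (WithLp.equiv 2 (Fin (n + m) → ℝ)).symm
    (Fin.append (WithLp.equiv 2 (Fin n → ℝ) y) (WithLp.equiv 2 (Fin m → ℝ) (A y)))

section basic
variable {n m : ℕ} (A : EuclideanSpace ℝ (Fin n) → EuclideanSpace ℝ (Fin m))

lemma piH_graphMap (y : EuclideanSpace ℝ (Fin n)) : piH n m (graphMap A y) = y := by
  ext i
  simp [piH, graphMap, WithLp.equiv_symm_apply, WithLp.equiv_apply, Fin.append_left]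

lemma piV_graphMap (y : EuclideanSpace ℝ (Fin n)) : piV n m (graphMap A y) = A y := by
  ext i
  simp [piV, graphMap, WithLp.equiv_symm_apply, WithLp.equiv_apply, Fin.append_right]

lemma graphMap_piH (x : EuclideanSpace ℝ (Fin (n + m))) (h : piV n m x = A (piH n m x)) :
    graphMap A (piH n m x) = x := by
  ext j
  refine Fin.addCases (fun i => ?_) (fun i => ?_) j
  · simp [graphMap, piH, WithLp.equiv_symm_apply, WithLp.equiv_apply, Fin.append_left]
  · have h2 : A (piH n m x) i = piV n m x i := by rw [h]
    simp only [graphMap, WithLp.equiv_symm_apply, Fin.append_right, WithLp.equiv_apply, h2]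
    simp [piV, WithLp.equiv_symm_apply]

lemma dist_graphMap_sq (y y' : EuclideanSpace ℝ (Fin n)) :
    dist (graphMap A y) (graphMap A y') ^ 2 = dist y y' ^ 2 + dist (A y) (A y') ^ 2 := by
  have h1 : ∀ (k : ℕ) (x x' : EuclideanSpace ℝ (Fin k)),
      dist x x' ^ 2 = ∑ i, dist (x i) (x' i) ^ 2 := by
    intro k x x'
    rw [EuclideanSpace.dist_eq, Real.sq_sqrt (by positivity)]
  rw [h1, h1, h1, Fin.sum_univ_add]
  congr 1
  · apply Finset.sum_congr rfl
    intro i _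
    congr 1 <;>
      simp [graphMap, WithLp.equiv_symm_apply, WithLp.equiv_apply, Fin.append_left]
  · apply Finset.sum_congr rfl
    intro i _
    congr 1 <;>
      simp [graphMap, WithLp.equiv_symm_apply, WithLp.equiv_apply, Fin.append_right]

end basic

/-- auxiliary: `x ≤ y` from `x² ≤ y²` for nonnegative reals. -/
lemma le_of_sq_le_sq' {x y : ℝ} (hx : 0 ≤ x) (hy : 0 ≤ y) (h : x ^ 2 ≤ y ^ 2) : x ≤ y := by
  nlinarith

noncomputable def K1 (L : ℝ≥0) : ℝ := Real.sqrt (1 + (L : ℝ) ^ 2)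

lemma K1_sq (L : ℝ≥0) : K1 L ^ 2 = 1 + (L : ℝ) ^ 2 := Real.sq_sqrt (by positivity)

lemma one_le_K1 (L : ℝ≥0) : 1 ≤ K1 L := by
  rw [show (1 : ℝ) = Real.sqrt 1 by simp]
  exact Real.sqrt_le_sqrt (by nlinarith [sq_nonneg ((L : ℝ))])

lemma K1_pos (L : ℝ≥0) : 0 < K1 L := lt_of_lt_of_le one_pos (one_le_K1 L)

section graph
variable {n m : ℕ} {A : EuclideanSpace ℝ (Fin n) → EuclideanSpace ℝ (Fin m)} {L : ℝ≥0}

lemma dist_graphMap_le (hA : LipschitzWith L A) (y y' : EuclideanSpace ℝ (Fin n)) :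
    dist (graphMap A y) (graphMap A y') ≤ K1 L * dist y y' := by
  have h := dist_graphMap_sq A y y'
  have hd := hA.dist_le_mul y y'
  refine le_of_sq_le_sq' dist_nonneg (mul_nonneg (K1_pos L).le dist_nonneg) ?_
  have hK := K1_sq L
  nlinarith [dist_nonneg (x := A y) (y := A y'), dist_nonneg (x := y) (y := y'),
    L.coe_nonneg]

lemma dist_le_dist_graphMap (y y' : EuclideanSpace ℝ (Fin n)) :
    dist y y' ≤ dist (graphMap A y) (graphMap A y') := by
  have h := dist_graphMap_sq A y y'
  refine le_of_sq_le_sq' dist_nonneg dist_nonneg ?_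
  nlinarith [sq_nonneg (dist (A y) (A y'))]

set_option maxHeartbeats 1000000 in
lemma ray_lemma (hA : LipschitzWith L A) (hL : (L : ℝ) ≤ 1)
    (y₀ v : EuclideanSpace ℝ (Fin n)) (hv : v ≠ 0)
    (s : ℝ) (hs : 0 ≤ s) (hsr : s ≤ ‖v‖) :
    (1 - (L : ℝ) ^ 2) / K1 L * (‖v‖ - s) ≤
      dist (graphMap A (y₀ + v)) (graphMap A y₀) -
        dist (graphMap A (y₀ + (s / ‖v‖) • v)) (graphMap A y₀) := by
  have hl0 : (0 : ℝ) ≤ L := L.coe_nonneg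
  have hr : 0 < ‖v‖ := norm_pos_iff.2 hv
  set r := ‖v‖ with hrdef
  set w := (s / r) • v with hwdef
  have hnw : ‖w‖ = s := by
    rw [hwdef, norm_smul, Real.norm_eq_abs, abs_of_nonneg (div_nonneg hs hr.le),
      div_mul_cancel₀ _ hr.ne']
  have hd1 : dist (y₀ + v) y₀ = r := by simp [dist_eq_norm, hrdef]
  have hd2 : dist (y₀ + w) y₀ = s := by simp [dist_eq_norm, ← hnw]
  have hd12 : dist (y₀ + v) (y₀ + w) = r - s := by
    rw [dist_eq_norm]
    have hvw : y₀ + v - (y₀ + w) = (1 - s / r) • v := by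
      rw [hwdef, sub_smul, one_smul]; abel
    rw [hvw, norm_smul, Real.norm_eq_abs,
      abs_of_nonneg (by rw [sub_nonneg]; exact div_le_one_of_le₀ hsr hr.le)]
    field_simp
    rw [← hrdef]; ring
  set dA1 := dist (A (y₀ + v)) (A y₀) with hdA1
  set dA2 := dist (A (y₀ + w)) (A y₀) with hdA2
  have hA1 : dA1 ≤ (L : ℝ) * r := by
    have h := hA.dist_le_mul (y₀ + v) y₀; rwa [hd1] at h
  have hA2 : dA2 ≤ (L : ℝ) * s := by
    have h := hA.dist_le_mul (y₀ + w) y₀; rwa [hd2] at h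
  have hA12 : dist (A (y₀ + v)) (A (y₀ + w)) ≤ (L : ℝ) * (r - s) := by
    have h := hA.dist_le_mul (y₀ + v) (y₀ + w); rwa [hd12] at h
  have habs : |dA1 - dA2| ≤ (L : ℝ) * (r - s) :=
    le_trans (abs_dist_sub_le _ _ _) hA12
  set f1 := dist (graphMap A (y₀ + v)) (graphMap A y₀) with hf1def
  set f2 := dist (graphMap A (y₀ + w)) (graphMap A y₀) with hf2def
  have hsq1 : f1 ^ 2 = r ^ 2 + dA1 ^ 2 := by
    have h := dist_graphMap_sq A (y₀ + v) y₀; rwa [hd1] at h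
  have hsq2 : f2 ^ 2 = s ^ 2 + dA2 ^ 2 := by
    have h := dist_graphMap_sq A (y₀ + w) y₀; rwa [hd2] at h
  have hf1r : r ≤ f1 := by
    have h := dist_le_dist_graphMap (A := A) (y₀ + v) y₀; rwa [hd1] at h
  have hsumle : f1 + f2 ≤ K1 L * (r + s) := by
    have h1 : f1 ≤ K1 L * r := by
      have h := dist_graphMap_le hA (y₀ + v) y₀; rwa [hd1] at h
    have h2 : f2 ≤ K1 L * s := by
      have h := dist_graphMap_le hA (y₀ + w) y₀; rwa [hd2] at h
    have h3 : K1 L * r + K1 L * s = K1 L * (r + s) := by ring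
    linarith
  have hf2nn : 0 ≤ f2 := dist_nonneg
  have hpos : 0 < f1 + f2 := by linarith
  have key : (1 - (L : ℝ) ^ 2) * (r - s) * (r + s) ≤ (f1 - f2) * (f1 + f2) := by
    have h1 : dA2 - dA1 ≤ (L : ℝ) * (r - s) := by
      have h := (abs_le.1 habs).1; linarith
    have h2 : dA1 + dA2 ≤ (L : ℝ) * (r + s) := by
      have : (L : ℝ) * r + (L : ℝ) * s = (L : ℝ) * (r + s) := by ring
      linarith
    have hdAnn : (0 : ℝ) ≤ dA1 + dA2 := add_nonneg dist_nonneg dist_nonneg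
    nlinarith [mul_nonneg (sub_nonneg.2 h1) hdAnn,
      mul_nonneg (sub_nonneg.2 h2) (mul_nonneg hl0 (sub_nonneg.2 hsr))]
  have hKpos := K1_pos L
  have hcK1 : (1 - (L : ℝ) ^ 2) / K1 L * K1 L = 1 - (L : ℝ) ^ 2 :=
    div_mul_cancel₀ _ hKpos.ne'
  have step : ((1 - (L : ℝ) ^ 2) / K1 L * (r - s)) * (f1 + f2) ≤ (f1 - f2) * (f1 + f2) := by
    have hconn : (0 : ℝ) ≤ (1 - (L : ℝ) ^ 2) / K1 L * (r - s) := by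
      apply mul_nonneg (div_nonneg (by nlinarith) hKpos.le) (by linarith)
    calc ((1 - (L : ℝ) ^ 2) / K1 L * (r - s)) * (f1 + f2)
        ≤ ((1 - (L : ℝ) ^ 2) / K1 L * (r - s)) * (K1 L * (r + s)) :=
          mul_le_mul_of_nonneg_left hsumle hconn
      _ = (1 - (L : ℝ) ^ 2) * (r - s) * (r + s) := by
          rw [show ((1 - (L : ℝ) ^ 2) / K1 L * (r - s)) * (K1 L * (r + s)) =
            ((1 - (L : ℝ) ^ 2) / K1 L * K1 L) * ((r - s) * (r + s)) from by ring, hcK1]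
          ring
      _ ≤ (f1 - f2) * (f1 + f2) := key
  exact le_of_mul_le_mul_right step hpos

end graph

lemma expand_aux {E : Type*} [NormedAddCommGroup E] [NormedSpace ℝ E]
    (y₀ : E) (f : E → ℝ) (K₁ c : ℝ) (hK : 1 ≤ K₁) (hc : 0 < c) (hcK : c ≤ K₁)
    (hf0 : ∀ y, dist y y₀ ≤ f y)
    (hflip : ∀ y y', |f y - f y'| ≤ K₁ * dist y y')
    (hray : ∀ v : E, v ≠ 0 → ∀ s : ℝ, 0 ≤ s → s ≤ ‖v‖ →
      c * (‖v‖ - s) ≤ f (y₀ + v) - f (y₀ + (s / ‖v‖) • v))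
    (y₁ y₂ : E) (h₁ : y₁ ≠ y₀) (h₂ : y₂ ≠ y₀) (hr : ‖y₂ - y₀‖ ≤ ‖y₁ - y₀‖) :
    c / (6 * K₁) * ‖y₁ - y₂‖ ≤
      ‖(f y₁ / ‖y₁ - y₀‖) • (y₁ - y₀) - (f y₂ / ‖y₂ - y₀‖) • (y₂ - y₀)‖ := by
  set v₁ := y₁ - y₀ with hv₁
  set v₂ := y₂ - y₀ with hv₂
  have hv₁0 : v₁ ≠ 0 := sub_ne_zero.2 h₁
  have hv₂0 : v₂ ≠ 0 := sub_ne_zero.2 h₂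
  set r₁ := ‖v₁‖ with hr₁def
  set r₂ := ‖v₂‖ with hr₂def
  have hr₁ : 0 < r₁ := norm_pos_iff.2 hv₁0
  have hr₂ : 0 < r₂ := norm_pos_iff.2 hv₂0
  have hf₁r : r₁ ≤ f y₁ := by simpa [dist_eq_norm] using hf0 y₁
  have hf₂r : r₂ ≤ f y₂ := by simpa [dist_eq_norm] using hf0 y₂
  set u₁ := r₁⁻¹ • v₁ with hu₁
  set u₂ := r₂⁻¹ • v₂ with hu₂
  have hnu₁ : ‖u₁‖ = 1 := by
    rw [hu₁, norm_smul, Real.norm_eq_abs, abs_inv, abs_of_pos hr₁]; field_simp; exact hr₁def.symm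
  have hnu₂ : ‖u₂‖ = 1 := by
    rw [hu₂, norm_smul, Real.norm_eq_abs, abs_inv, abs_of_pos hr₂]; field_simp; exact hr₂def.symm
  have hΦ₁ : (f y₁ / r₁) • v₁ = f y₁ • u₁ := by
    rw [hu₁, smul_smul, div_eq_mul_inv]
  have hΦ₂ : (f y₂ / r₂) • v₂ = f y₂ • u₂ := by
    rw [hu₂, smul_smul, div_eq_mul_inv]
  set Φ₁ := (f y₁ / r₁) • v₁ with hPhi1
  set Φ₂ := (f y₂ / r₂) • v₂ with hPhi2
  set D := ‖Φ₁ - Φ₂‖ with hD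
  have hD0 : 0 ≤ D := norm_nonneg _
  have hnΦ₁ : ‖Φ₁‖ = f y₁ := by
    rw [hPhi1, norm_smul, Real.norm_eq_abs, abs_of_nonneg (div_nonneg (le_trans hr₁.le hf₁r) hr₁.le),
      div_mul_cancel₀ _ hr₁.ne']
  have hnΦ₂ : ‖Φ₂‖ = f y₂ := by
    rw [hPhi2, norm_smul, Real.norm_eq_abs, abs_of_nonneg (div_nonneg (le_trans hr₂.le hf₂r) hr₂.le),
      div_mul_cancel₀ _ hr₂.ne']
  have hE1 : |f y₁ - f y₂| ≤ D := by
    have h := abs_norm_sub_norm_le Φ₁ Φ₂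
    rw [hnΦ₁, hnΦ₂] at h; exact h
  have hv₂u : v₂ = r₂ • u₂ := by rw [hu₂, smul_smul, mul_inv_cancel₀ hr₂.ne', one_smul]
  have hwu : (r₂ / r₁) • v₁ = r₂ • u₁ := by rw [hu₁, smul_smul, div_eq_mul_inv]
  set q := ‖(r₂ / r₁) • v₁ - v₂‖ with hqdef
  have hq : q = r₂ * ‖u₁ - u₂‖ := by
    rw [hqdef, hwu]; nth_rewrite 1 [hv₂u]
    rw [← smul_sub, norm_smul, Real.norm_eq_abs, abs_of_pos hr₂]
  have hq0 : 0 ≤ q := norm_nonneg _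
  have hid : Φ₁ - Φ₂ = (f y₁ - f y₂) • u₁ + f y₂ • (u₁ - u₂) := by
    rw [hΦ₁, hΦ₂]; module
  have hE2 : q ≤ 2 * D := by
    have h5 : f y₂ • (u₁ - u₂) = (Φ₁ - Φ₂) - (f y₁ - f y₂) • u₁ := by
      rw [hid]; abel
    have h6 : f y₂ * ‖u₁ - u₂‖ ≤ D + |f y₁ - f y₂| := by
      calc f y₂ * ‖u₁ - u₂‖ = ‖f y₂ • (u₁ - u₂)‖ := by
            rw [norm_smul, Real.norm_eq_abs, abs_of_nonneg (le_trans hr₂.le hf₂r)]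
        _ ≤ ‖Φ₁ - Φ₂‖ + ‖(f y₁ - f y₂) • u₁‖ := by rw [h5]; exact norm_sub_le _ _
        _ = D + |f y₁ - f y₂| := by rw [norm_smul, hnu₁, mul_one, Real.norm_eq_abs]
    have h7 : r₂ * ‖u₁ - u₂‖ ≤ f y₂ * ‖u₁ - u₂‖ :=
      mul_le_mul_of_nonneg_right hf₂r (norm_nonneg _)
    rw [hq]; linarith
  have hfd : c * (r₁ - r₂) - K₁ * q ≤ f y₁ - f y₂ := by
    have hray' := hray v₁ hv₁0 r₂ hr₂.le hr
    have hy₁ : y₀ + v₁ = y₁ := by rw [hv₁]; abel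
    rw [hy₁] at hray'
    have hlip' := hflip (y₀ + (r₂ / r₁) • v₁) y₂
    have hdd : dist (y₀ + (r₂ / r₁) • v₁) y₂ = q := by
      rw [dist_eq_norm, hqdef]; congr 1; rw [hv₂]; abel
    rw [hdd] at hlip'
    have h := abs_le.1 hlip'
    linarith [h.1, h.2]
  have hDiam : ‖y₁ - y₂‖ ≤ (r₁ - r₂) + q := by
    have hsplit : y₁ - y₂ = (v₁ - (r₂ / r₁) • v₁) + ((r₂ / r₁) • v₁ - v₂) := by
      rw [hv₁, hv₂]; abel
    have h8 : ‖v₁ - (r₂ / r₁) • v₁‖ = r₁ - r₂ := by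
      have h9 : v₁ - (r₂ / r₁) • v₁ = (1 - r₂ / r₁) • v₁ := by
        rw [sub_smul, one_smul]
      rw [h9, norm_smul, Real.norm_eq_abs,
        abs_of_nonneg (by rw [sub_nonneg]; exact div_le_one_of_le₀ hr hr₁.le)]
      field_simp
      rw [← hr₁def]; ring
    calc ‖y₁ - y₂‖ ≤ ‖v₁ - (r₂ / r₁) • v₁‖ + ‖(r₂ / r₁) • v₁ - v₂‖ := by
          rw [hsplit]; exact norm_add_le _ _
      _ = (r₁ - r₂) + q := by rw [h8]
  have hKpos : (0:ℝ) < K₁ := lt_of_lt_of_le one_pos hK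
  rw [div_mul_eq_mul_div, div_le_iff₀ (by positivity : (0:ℝ) < 6 * K₁)]
  have e2 : c * (r₁ - r₂) ≤ D + K₁ * q := by
    have h10 : f y₁ - f y₂ ≤ D := le_trans (le_abs_self _) hE1
    linarith
  have e1 : c * ‖y₁ - y₂‖ ≤ c * ((r₁ - r₂) + q) :=
    mul_le_mul_of_nonneg_left hDiam hc.le
  have e3 : (K₁ + c) * q ≤ (K₁ + c) * (2 * D) :=
    mul_le_mul_of_nonneg_left hE2 (by linarith)
  nlinarith [hD0, mul_le_mul_of_nonneg_right hK hD0, mul_le_mul_of_nonneg_right hcK hD0]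

lemma pow_bound (n : ℕ) {a b : ℝ} (ha : 0 ≤ a) (hab : a ≤ b) :
    b ^ n ≤ a ^ n + n * b ^ (n - 1) * (b - a) := by
  induction n with
  | zero => simp
  | succ k ih =>
    have hb : 0 ≤ b := le_trans ha hab
    rcases Nat.eq_zero_or_pos k with hk | hk
    · subst hk; simp
    · have hkk : k - 1 + 1 = k := Nat.succ_pred_eq_of_pos hk
      have h2 : b * b ^ (k - 1) = b ^ k := by rw [← pow_succ', hkk]
      have h3 : b ^ (k + 1) ≤ b * (a ^ k + k * b ^ (k - 1) * (b - a)) := by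
        rw [show b ^ (k+1) = b * b ^ k from by ring]
        exact mul_le_mul_of_nonneg_left ih hb
      have h4 : b * (a ^ k + (k : ℝ) * b ^ (k - 1) * (b - a))
          = b * a ^ k + (k : ℝ) * b ^ k * (b - a) := by
        rw [show b * (a ^ k + (k : ℝ) * b ^ (k - 1) * (b - a))
          = b * a ^ k + (k : ℝ) * (b * b ^ (k-1)) * (b - a) from by ring, h2]
      have h5 : b * a ^ k = a ^ (k + 1) + a ^ k * (b - a) := by ring
      have h6 : a ^ k * (b - a) ≤ b ^ k * (b - a) :=
        mul_le_mul_of_nonneg_right (pow_le_pow_left₀ ha hab k) (by linarith)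
      have h7 : (k + 1 : ℕ) - 1 = k := by simp
      rw [h7]
      push_cast
      nlinarith [h3, h4, h5, h6]

/-- Lemma 2.3: if `Γ ⊂ ℝ^d` (`d = n + m`) is the graph of a Lipschitz
function `𝒜 : ℝ^n → ℝ^{d−n}` with `Lip(𝒜) < 1`, then there is `C > 0` depending only on
`n`, `d` and `Lip(𝒜)` such that for every `z ∈ Γ` and all `0 < a ≤ b`,
`ℋ^n(Γ ∩ A(z,a,b)) ≤ C (b − a) b^{n−1}`, where `A(z,a,b)` is the closed annulus. -/
theorem stmt6 (n m : ℕ) (hn : 1 ≤ n) (hm : 1 ≤ m)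
    (A : EuclideanSpace ℝ (Fin n) → EuclideanSpace ℝ (Fin m)) (L : ℝ≥0) (hL : L < 1)
    (hA : LipschitzWith L A) :
    ∃ C > 0, ∀ z ∈ {x : EuclideanSpace ℝ (Fin (n + m)) | piV n m x = A (piH n m x)},
      ∀ a b : ℝ, 0 < a → a ≤ b →
        μH[n] ({x : EuclideanSpace ℝ (Fin (n + m)) | piV n m x = A (piH n m x)}
            ∩ {x | a ≤ dist x z ∧ dist x z ≤ b})
          ≤ ENNReal.ofReal (C * (b - a) * b ^ (n - 1)) := by
  classical
  have hl0 : (0:ℝ) ≤ L := L.coe_nonneg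
  have hl1 : ((L:ℝ)) < 1 := hL
  have hK1one : 1 ≤ K1 L := one_le_K1 L
  have hKpos : (0:ℝ) < K1 L := K1_pos L
  set c : ℝ := (1 - (L:ℝ)^2) / K1 L with hcdef
  have hcpos : 0 < c := div_pos (by nlinarith) hKpos
  have hcK : c ≤ K1 L := by
    rw [hcdef, div_le_iff₀ hKpos]
    nlinarith [K1_sq L]
  set c' : ℝ := c / (6 * K1 L) with hc'def
  have hc'pos : 0 < c' := div_pos hcpos (by positivity)
  set KG : ℝ≥0 := ⟨K1 L, hKpos.le⟩ with hKG
  set KP : ℝ≥0 := ⟨1 / c', by positivity⟩ with hKP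
  set Kn : ℝ≥0 := (Fintype.card (Fin n) : ℝ≥0) ^ (1 / (2:ℝ≥0∞)).toReal with hKn
  set V : ℝ≥0∞ := volume (ball (0 : EuclideanSpace ℝ (Fin n)) 1) with hVdef
  have hVne : V ≠ ⊤ := measure_ball_lt_top.ne
  set M : ℝ≥0∞ := (KG:ℝ≥0∞)^(n:ℝ) * (KP:ℝ≥0∞)^(n:ℝ) * (Kn:ℝ≥0∞)^(n:ℝ) * (n:ℝ≥0∞) * V
    with hMdef
  have hMne : M ≠ ⊤ := by
    have h1 : (KG:ℝ≥0∞)^(n:ℝ) ≠ ⊤ :=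
      ENNReal.rpow_ne_top_of_nonneg (by positivity) ENNReal.coe_ne_top
    have h2 : (KP:ℝ≥0∞)^(n:ℝ) ≠ ⊤ :=
      ENNReal.rpow_ne_top_of_nonneg (by positivity) ENNReal.coe_ne_top
    have h3 : (Kn:ℝ≥0∞)^(n:ℝ) ≠ ⊤ :=
      ENNReal.rpow_ne_top_of_nonneg (by positivity) ENNReal.coe_ne_top
    exact ENNReal.mul_ne_top (ENNReal.mul_ne_top (ENNReal.mul_ne_top
      (ENNReal.mul_ne_top h1 h2) h3) (ENNReal.natCast_ne_top n)) hVne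
  refine ⟨M.toReal + 1, by positivity, ?_⟩
  intro z hz a b ha hab
  have hb : (0:ℝ) < b := lt_of_lt_of_le ha hab
  have hzmem : piV n m z = A (piH n m z) := hz
  set y₀ := piH n m z with hy₀
  have hzG : graphMap A y₀ = z := graphMap_piH A z hzmem
  set S : Set (EuclideanSpace ℝ (Fin n)) :=
    {y | a ≤ dist (graphMap A y) z ∧ dist (graphMap A y) z ≤ b} with hSdef
  -- set identity
  have hset : {x : EuclideanSpace ℝ (Fin (n+m)) | piV n m x = A (piH n m x)}
      ∩ {x | a ≤ dist x z ∧ dist x z ≤ b} = graphMap A '' S := by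
    ext x
    constructor
    · rintro ⟨hx1, hx2⟩
      have hgx : graphMap A (piH n m x) = x := graphMap_piH A x hx1
      exact ⟨piH n m x, by rw [hSdef, mem_setOf_eq, hgx]; exact hx2, hgx⟩
    · rintro ⟨y, hy, rfl⟩
      refine ⟨?_, hy⟩
      show piV n m (graphMap A y) = A (piH n m (graphMap A y))
      rw [piV_graphMap, piH_graphMap]
  -- properties of the distance function
  have hf0 : ∀ y, dist y y₀ ≤ dist (graphMap A y) z := by
    intro y
    rw [← hzG]
    exact dist_le_dist_graphMap y y₀
  have hflip : ∀ y y', |dist (graphMap A y) z - dist (graphMap A y') z| ≤ K1 L * dist y y' :=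
    fun y y' => le_trans (abs_dist_sub_le _ _ _) (dist_graphMap_le hA y y')
  have hray : ∀ v : EuclideanSpace ℝ (Fin n), v ≠ 0 → ∀ s : ℝ, 0 ≤ s → s ≤ ‖v‖ →
      c * (‖v‖ - s) ≤ dist (graphMap A (y₀ + v)) z - dist (graphMap A (y₀ + (s/‖v‖) • v)) z := by
    intro v hv s hs hsr
    have h := ray_lemma hA hl1.le y₀ v hv s hs hsr
    rw [hzG] at h
    exact h
  set Φ : EuclideanSpace ℝ (Fin n) → EuclideanSpace ℝ (Fin n) :=
    fun y => (dist (graphMap A y) z / ‖y - y₀‖) • (y - y₀) with hΦdef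
  have hS0 : ∀ y ∈ S, y ≠ y₀ := by
    intro y hy hcon
    rw [hSdef, mem_setOf_eq, hcon, hzG, dist_self] at hy
    linarith [hy.1]
  have hexp : ∀ y₁ ∈ S, ∀ y₂ ∈ S, c' * ‖y₁ - y₂‖ ≤ ‖Φ y₁ - Φ y₂‖ := by
    intro y₁ h₁ y₂ h₂
    rcases le_total ‖y₂ - y₀‖ ‖y₁ - y₀‖ with hle | hle
    · exact expand_aux y₀ (fun y => dist (graphMap A y) z) (K1 L) c hK1one hcpos hcK
        hf0 hflip hray y₁ y₂ (hS0 _ h₁) (hS0 _ h₂) hle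
    · rw [norm_sub_rev y₁ y₂, norm_sub_rev (Φ y₁) (Φ y₂)]
      exact expand_aux y₀ (fun y => dist (graphMap A y) z) (K1 L) c hK1one hcpos hcK
        hf0 hflip hray y₂ y₁ (hS0 _ h₂) (hS0 _ h₁) hle
  have hinj : InjOn Φ S := by
    intro y₁ h₁ y₂ h₂ heq
    have h := hexp y₁ h₁ y₂ h₂
    rw [heq, sub_self, norm_zero] at h
    have h0 : ‖y₁ - y₂‖ = 0 := le_antisymm (by nlinarith [norm_nonneg (y₁ - y₂)]) (norm_nonneg _)
    exact sub_eq_zero.1 (norm_eq_zero.1 h0)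
  set Ψ := Function.invFunOn Φ S with hΨdef
  have hΨim : Ψ '' (Φ '' S) = S := hinj.invFunOn_image Subset.rfl
  have lipΨ : LipschitzOnWith KP Ψ (Φ '' S) := by
    rw [lipschitzOnWith_iff_dist_le_mul]
    intro w₁ hw₁ w₂ hw₂
    have hmem₁ : Ψ w₁ ∈ S := Function.invFunOn_mem (by
      rcases hw₁ with ⟨y, hy, rfl⟩; exact ⟨y, hy, rfl⟩)
    have hmem₂ : Ψ w₂ ∈ S := Function.invFunOn_mem (by
      rcases hw₂ with ⟨y, hy, rfl⟩; exact ⟨y, hy, rfl⟩)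
    have heq₁ : Φ (Ψ w₁) = w₁ := Function.invFunOn_eq (by
      rcases hw₁ with ⟨y, hy, rfl⟩; exact ⟨y, hy, rfl⟩)
    have heq₂ : Φ (Ψ w₂) = w₂ := Function.invFunOn_eq (by
      rcases hw₂ with ⟨y, hy, rfl⟩; exact ⟨y, hy, rfl⟩)
    have h := hexp _ hmem₁ _ hmem₂
    rw [heq₁, heq₂] at h
    rw [dist_eq_norm, dist_eq_norm]
    rw [show ((KP:ℝ)) = 1 / c' from rfl]
    rw [one_div, inv_mul_eq_div, le_div_iff₀ hc'pos, mul_comm]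
    exact h
  -- the image of Φ lies in the annulus
  have hTsub : Φ '' S ⊆ closedBall (0 : EuclideanSpace ℝ (Fin n)) b \ ball 0 a := by
    rintro _ ⟨y, hy, rfl⟩
    have hy0 : y ≠ y₀ := hS0 y hy
    have hr : 0 < ‖y - y₀‖ := norm_pos_iff.2 (sub_ne_zero.2 hy0)
    have hfy : 0 ≤ dist (graphMap A y) z := dist_nonneg
    have hnorm : ‖Φ y‖ = dist (graphMap A y) z := by
      rw [hΦdef]
      simp only
      rw [norm_smul, Real.norm_eq_abs, abs_of_nonneg (div_nonneg hfy hr.le),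
        div_mul_cancel₀ _ hr.ne']
    constructor
    · rw [mem_closedBall_zero_iff, hnorm]; exact hy.2
    · rw [mem_ball_zero_iff, hnorm]; push_neg; exact hy.1
  -- Lipschitz property of the graph map
  have lipG : LipschitzWith KG (graphMap A) := by
    apply LipschitzWith.of_dist_le_mul
    intro x y
    exact dist_graphMap_le hA x y
  -- Hausdorff measure vs volume on Euclidean space
  have lipe : LipschitzWith Kn ((WithLp.equiv 2 (Fin n → ℝ)).symm) := by
    intro x y
    have h := PiLp.lipschitzWith_toLp 2 (fun _ : Fin n => ℝ) x y
    simpa [hKn] using h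
  set X := closedBall (0 : EuclideanSpace ℝ (Fin n)) b \ ball 0 a with hXdef
  have hXmeas : MeasurableSet X := measurableSet_closedBall.diff measurableSet_ball
  have step4 : μH[n] X ≤ (Kn:ℝ≥0∞)^(n:ℝ) * volume X := by
    have himg : (WithLp.equiv 2 (Fin n → ℝ)).symm '' ((WithLp.equiv 2 (Fin n → ℝ)).symm ⁻¹' X)
        = X := Set.image_preimage_eq X (Equiv.surjective _)
    have hpi : (μH[(n:ℝ)] : Measure ((Fin n) → ℝ)) = volume := by
      have h := MeasureTheory.hausdorffMeasure_pi_real (ι := Fin n)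
      rwa [Fintype.card_fin] at h
    have hvolpre : volume ((WithLp.equiv 2 (Fin n → ℝ)).symm ⁻¹' X) = volume X := by
      have h := (MeasurePreserving.symm _ (EuclideanSpace.volume_preserving_symm_measurableEquiv_toLp (Fin n))).measure_preimage
        hXmeas.nullMeasurableSet
      exact h
    calc μH[n] X = μH[n] ((WithLp.equiv 2 (Fin n → ℝ)).symm ''
          ((WithLp.equiv 2 (Fin n → ℝ)).symm ⁻¹' X)) := by rw [himg]
      _ ≤ (Kn:ℝ≥0∞)^(n:ℝ) * μH[n] ((WithLp.equiv 2 (Fin n → ℝ)).symm ⁻¹' X) :=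
          lipe.hausdorffMeasure_image_le (by positivity) _
      _ = (Kn:ℝ≥0∞)^(n:ℝ) * volume ((WithLp.equiv 2 (Fin n → ℝ)).symm ⁻¹' X) := by rw [hpi]
      _ = (Kn:ℝ≥0∞)^(n:ℝ) * volume X := by rw [hvolpre]
  -- volume of the annulus
  haveI : Nontrivial (EuclideanSpace ℝ (Fin n)) := by
    apply Module.nontrivial_of_finrank_pos (R := ℝ) (M := EuclideanSpace ℝ (Fin n))
    rw [finrank_euclideanSpace_fin]
    omega
  have step5 : volume X ≤ ENNReal.ofReal ((n:ℝ) * b^(n-1) * (b-a)) * V := by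
    have hsub : ball (0 : EuclideanSpace ℝ (Fin n)) a ⊆ closedBall 0 b :=
      ball_subset_closedBall.trans (closedBall_subset_closedBall hab)
    rw [hXdef, measure_diff hsub measurableSet_ball.nullMeasurableSet measure_ball_lt_top.ne]
    have hcb : volume (closedBall (0 : EuclideanSpace ℝ (Fin n)) b)
        = ENNReal.ofReal (b ^ n) * V := by
      rw [Measure.addHaar_closedBall volume 0 hb.le, finrank_euclideanSpace_fin]
    have hball : volume (ball (0 : EuclideanSpace ℝ (Fin n)) a)
        = ENNReal.ofReal (a ^ n) * V := by
      rw [Measure.addHaar_ball volume 0 ha.le, finrank_euclideanSpace_fin]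
    rw [hcb, hball, tsub_le_iff_right, ← add_mul,
      ← ENNReal.ofReal_add (mul_nonneg (mul_nonneg (Nat.cast_nonneg n)
        (pow_nonneg hb.le _)) (sub_nonneg.2 hab)) (by positivity)]
    apply mul_le_mul_left
    apply ENNReal.ofReal_le_ofReal
    linarith [pow_bound n ha.le hab]
  -- assemble the chain
  have step1 : μH[n] (graphMap A '' S) ≤ (KG:ℝ≥0∞)^(n:ℝ) * μH[n] S :=
    lipG.hausdorffMeasure_image_le (by positivity) S
  have step2 : μH[n] S ≤ (KP:ℝ≥0∞)^(n:ℝ) * μH[n] (Φ '' S) := by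
    conv_lhs => rw [← hΨim]
    exact lipΨ.hausdorffMeasure_image_le (by positivity)
  have step3 : μH[n] (Φ '' S) ≤ μH[n] X := measure_mono hTsub
  set w : ℝ := (b - a) * b ^ (n - 1) with hwdef
  have hw : 0 ≤ w := by
    rw [hwdef]; apply mul_nonneg (by linarith) (by positivity)
  have hofr : ENNReal.ofReal ((n:ℝ) * b^(n-1) * (b-a)) = (n:ℝ≥0∞) * ENNReal.ofReal w := by
    rw [show (n:ℝ) * b^(n-1) * (b-a) = (n:ℝ) * w from by rw [hwdef]; ring,
      ENNReal.ofReal_mul (by positivity), ENNReal.ofReal_natCast]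
  have main : μH[n] ({x : EuclideanSpace ℝ (Fin (n+m)) | piV n m x = A (piH n m x)}
      ∩ {x | a ≤ dist x z ∧ dist x z ≤ b}) ≤ M * ENNReal.ofReal w := by
    rw [hset]
    calc μH[n] (graphMap A '' S) ≤ (KG:ℝ≥0∞)^(n:ℝ) * μH[n] S := step1
      _ ≤ (KG:ℝ≥0∞)^(n:ℝ) * ((KP:ℝ≥0∞)^(n:ℝ) * μH[n] (Φ '' S)) :=
          mul_le_mul_right step2 _
      _ ≤ (KG:ℝ≥0∞)^(n:ℝ) * ((KP:ℝ≥0∞)^(n:ℝ) * μH[n] X) :=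
          mul_le_mul_right (mul_le_mul_right step3 _) _
      _ ≤ (KG:ℝ≥0∞)^(n:ℝ) * ((KP:ℝ≥0∞)^(n:ℝ) * ((Kn:ℝ≥0∞)^(n:ℝ) * volume X)) :=
          mul_le_mul_right (mul_le_mul_right step4 _) _
      _ ≤ (KG:ℝ≥0∞)^(n:ℝ) * ((KP:ℝ≥0∞)^(n:ℝ) * ((Kn:ℝ≥0∞)^(n:ℝ) *
            (ENNReal.ofReal ((n:ℝ) * b^(n-1) * (b-a)) * V))) :=
          mul_le_mul_right (mul_le_mul_right (mul_le_mul_right step5 _) _) _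
      _ = M * ENNReal.ofReal w := by
          rw [hofr, hMdef]; ring
  refine le_trans main ?_
  have hMle : M ≤ ENNReal.ofReal (M.toReal + 1) := by
    conv_lhs => rw [← ENNReal.ofReal_toReal hMne]
    exact ENNReal.ofReal_le_ofReal (by linarith)
  calc M * ENNReal.ofReal w ≤ ENNReal.ofReal (M.toReal + 1) * ENNReal.ofReal w :=
        mul_le_mul_left hMle _
    _ = ENNReal.ofReal ((M.toReal + 1) * w) := (ENNReal.ofReal_mul (by positivity)).symm
    _ = ENNReal.ofReal ((M.toReal + 1) * (b - a) * b ^ (n - 1)) := by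
        rw [hwdef]; ring_nf
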